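/- Let K ≥ 3 and let z be a real-valued random variable with E[z] = 0, E[z²] ≥ 1, and E[z⁴] ≤ K. Then for every real number β, the probability that |z − β| ≤ 0.1 is at most 1 − 1/(10K). -/

import Mathlib

open MeasureTheory ProbabilityTheory Filter
open scoped ProbabilityTheory

lemma cs_helper {α : Type*} {m : MeasurableSpace α} {μ : Measure α} [IsFiniteMeasure μ]
    {f : α → ℝ} (hf : ∀ x, 0 ≤ f x) (h2 : MemLp f 2 μ) :
    ∫ a, f a ∂μ ≤ Real.sqrt (∫ a, (f a) ^ 2 ∂μ) * Real.sqrt ((μ Set.univ).toReal) := by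
  have h2' : MemLp f (ENNReal.ofReal 2) μ := by
    rwa [show ENNReal.ofReal 2 = 2 by norm_num]
  have h1' : MemLp (fun _ : α => (1:ℝ)) (ENNReal.ofReal 2) μ := memLp_const 1
  have key := integral_mul_le_Lp_mul_Lq_of_nonneg (μ := μ)
    (⟨by norm_num, by norm_num, by norm_num⟩ : (2:ℝ).HolderConjugate 2)
    (Eventually.of_forall hf) (Eventually.of_forall fun _ => zero_le_one) h2' h1'
  simp only [mul_one, one_pow] at key
  have hrw : ∀ x : ℝ, 0 ≤ x → x ^ (2:ℝ) = x ^ 2 := fun x hx => by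
    rw [show (2:ℝ) = ((2:ℕ):ℝ) by norm_num, Real.rpow_natCast]
  calc ∫ a, f a ∂μ ≤ (∫ a, f a ^ (2:ℝ) ∂μ) ^ (1/(2:ℝ)) * (∫ a, (1:ℝ) ^ (2:ℝ) ∂μ) ^ (1/(2:ℝ)) := key
    _ = Real.sqrt (∫ a, (f a) ^ 2 ∂μ) * Real.sqrt ((μ Set.univ).toReal) := by
        rw [Real.sqrt_eq_rpow, Real.sqrt_eq_rpow]
        congr 1
        · congr 1; exact integral_congr_ae (Eventually.of_forall fun x => hrw _ (hf x))
        · congr 1; simp [integral_const, measureReal_def]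

set_option maxHeartbeats 1000000 in
theorem anti_concentration_of_hypercontractive
    {Ω : Type*} [MeasureSpace Ω] [IsProbabilityMeasure (ℙ : Measure Ω)]
    (K : ℝ) (hK : 3 ≤ K) (z : Ω → ℝ) (hmeas : Measurable z)
    (hmom : MemLp z 4 ℙ)
    (hmean : ∫ ω, z ω = 0)
    (hvar : 1 ≤ ∫ ω, (z ω) ^ 2)
    (hfourth : ∫ ω, (z ω) ^ 4 ≤ K)
    (β : ℝ) :
    (ℙ {ω | |z ω - β| ≤ 0.1}).toReal ≤ 1 - 1 / (10 * K) := by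
  set A : Set Ω := {ω | |z ω - β| ≤ 0.1} with hAdef
  have hA : MeasurableSet A :=
    measurableSet_le ((hmeas.sub measurable_const).abs) measurable_const
  by_contra hcon
  push_neg at hcon
  have hK0 : (0:ℝ) < K := by linarith
  set p := (ℙ A).toReal with hpdef
  set q := (ℙ Aᶜ).toReal with hqdef
  have hple : p ≤ 1 := by
    have := prob_le_one (μ := (ℙ : Measure Ω)) (s := A)
    simpa [hpdef] using ENNReal.toReal_mono ENNReal.one_ne_top this
  have hq_eq : q = 1 - p := by
    rw [hqdef, hpdef, measure_compl hA (measure_ne_top _ _), measure_univ,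
      ENNReal.toReal_sub_of_le prob_le_one (by simp)]
    simp
  have hq0 : 0 ≤ q := ENNReal.toReal_nonneg
  have hp0 : 0 ≤ p := ENNReal.toReal_nonneg
  have hqlt : q ≤ 1/(10*K) := by rw [hq_eq]; linarith
  -- membership / integrability facts
  have hz2 : MemLp (fun ω => (z ω)^2) 2 ℙ := by
    have h := hmom.smul (𝕜 := ℝ) hmom (p := 4) (q := 4) (r := 2)
      (hpqr := ⟨by
        rw [show (4:ENNReal) = 2 * 2 by norm_num, ENNReal.mul_inv (by simp) (by simp), ← add_mul,
          ENNReal.inv_two_add_inv_two, one_mul]⟩)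
    have heq : (z • z) = fun ω => (z ω)^2 := by funext ω; simp [sq]
    rwa [heq] at h
  have hz4mem : MemLp (fun ω => (z ω)^4) 1 ℙ := by
    have h := hz2.smul (𝕜 := ℝ) hz2 (p := 2) (q := 2) (r := 1)
      (hpqr := ⟨by rw [ENNReal.inv_two_add_inv_two, inv_one]⟩)
    have heq : ((fun ω => (z ω)^2) • (fun ω => (z ω)^2)) = fun ω => (z ω)^4 := by
      funext ω; simp only [Pi.smul_apply', Pi.smul_apply, smul_eq_mul]; ring
    rwa [heq] at h
  have h4int : Integrable (fun ω => (z ω)^4) ℙ := hz4mem.integrable le_rfl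
  have h2int : Integrable (fun ω => (z ω)^2) ℙ := hz2.integrable one_le_two
  have h1int : Integrable z ℙ := hmom.integrable (by norm_num)
  have hzabs2 : MemLp (fun ω => |z ω|) 2 ℙ := by
    have h := (hmom.mono_exponent (by norm_num : (2:ENNReal) ≤ 4)).norm
    simpa [Real.norm_eq_abs] using h
  -- CS : E[z²] ≤ √K
  have hE2 : ∫ ω, (z ω)^2 ≤ Real.sqrt K := by
    have h := cs_helper (fun ω => sq_nonneg (z ω)) hz2
    rw [measure_univ] at h
    simp only [ENNReal.toReal_one, Real.sqrt_one, mul_one] at h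
    refine h.trans (Real.sqrt_le_sqrt ?_)
    calc ∫ ω, ((z ω)^2)^2 = ∫ ω, (z ω)^4 := by congr 1; funext ω; ring
      _ ≤ K := hfourth
  -- CS on Aᶜ for z²
  have hz4nonneg : ∀ ω, (0:ℝ) ≤ (z ω)^4 := fun ω => by positivity
  have hcs2 : ∫ ω in Aᶜ, (z ω)^2 ≤ Real.sqrt K * Real.sqrt q := by
    have h := cs_helper (μ := (ℙ : Measure Ω).restrict Aᶜ)
      (fun ω => sq_nonneg (z ω)) (hz2.restrict Aᶜ)
    rw [Measure.restrict_apply_univ] at h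
    refine h.trans (mul_le_mul_of_nonneg_right (Real.sqrt_le_sqrt ?_) (Real.sqrt_nonneg _))
    calc ∫ ω in Aᶜ, ((z ω)^2)^2 = ∫ ω in Aᶜ, (z ω)^4 := by congr 1; funext ω; ring
      _ ≤ ∫ ω, (z ω)^4 := setIntegral_le_integral h4int (Eventually.of_forall hz4nonneg)
      _ ≤ K := hfourth
  -- CS on Aᶜ for |z|
  have hcs3 : ∫ ω in Aᶜ, |z ω| ≤ Real.sqrt (Real.sqrt K) * Real.sqrt q := by
    have h := cs_helper (μ := (ℙ : Measure Ω).restrict Aᶜ)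
      (fun ω => abs_nonneg (z ω)) (hzabs2.restrict Aᶜ)
    rw [Measure.restrict_apply_univ] at h
    refine h.trans (mul_le_mul_of_nonneg_right (Real.sqrt_le_sqrt ?_) (Real.sqrt_nonneg _))
    calc ∫ ω in Aᶜ, (|z ω|)^2 = ∫ ω in Aᶜ, (z ω)^2 := by congr 1; funext ω; rw [sq_abs]
      _ ≤ ∫ ω, (z ω)^2 :=
          setIntegral_le_integral h2int (Eventually.of_forall fun ω => sq_nonneg _)
      _ ≤ Real.sqrt K := hE2
  -- splits
  have hsplit2 : (∫ ω in A, (z ω)^2) + ∫ ω in Aᶜ, (z ω)^2 = ∫ ω, (z ω)^2 :=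
    integral_add_compl hA h2int
  have hsplit1 : (∫ ω in A, z ω) + ∫ ω in Aᶜ, z ω = 0 := by
    rw [integral_add_compl hA h1int]; exact hmean
  -- bound on A for z²
  have hzA : ∀ ω ∈ A, |z ω| ≤ |β| + 0.1 := by
    intro ω hω
    have h1 : |z ω - β| ≤ 0.1 := hω
    calc |z ω| = |(z ω - β) + β| := by ring_nf
      _ ≤ |z ω - β| + |β| := abs_add_le _ _
      _ ≤ |β| + 0.1 := by linarith
  have hA2 : ∫ ω in A, (z ω)^2 ≤ (|β| + 0.1)^2 * p := by
    have hb := norm_setIntegral_le_of_norm_le_const (μ := (ℙ : Measure Ω)) (s := A)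
      (f := fun ω => (z ω)^2) (C := (|β| + 0.1)^2) (measure_lt_top _ _) ?_
    · exact (le_abs_self _).trans (by simpa [Real.norm_eq_abs, hpdef, measureReal_def] using hb)
    · intro x hx
      rw [Real.norm_eq_abs, abs_of_nonneg (sq_nonneg _)]
      calc (z x)^2 = |z x|^2 := (sq_abs _).symm
        _ ≤ (|β| + 0.1)^2 := by
            have := hzA x hx
            have h0 : (0:ℝ) ≤ |z x| := abs_nonneg _
            nlinarith
  -- bound on A for β - z
  have hAβ : |∫ ω in A, (β - z ω)| ≤ 0.1 * p := by
    have hb := norm_setIntegral_le_of_norm_le_const (μ := (ℙ : Measure Ω)) (s := A)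
      (f := fun ω => β - z ω) (C := 0.1) (measure_lt_top _ _) ?_
    · simpa [Real.norm_eq_abs, hpdef, measureReal_def] using hb
    · intro x hx
      rw [Real.norm_eq_abs, abs_sub_comm]
      exact hx
  have hconstA : ∫ _ω in A, (β:ℝ) = p * β := by
    rw [setIntegral_const, hpdef]; simp [measureReal_def]
  have hsubA : ∫ ω in A, (β - z ω) = p * β - ∫ ω in A, z ω := by
    rw [integral_sub (integrable_const β) h1int.integrableOn, hconstA]
  have hAcabs : |∫ ω in Aᶜ, z ω| ≤ ∫ ω in Aᶜ, |z ω| := by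
    simpa [Real.norm_eq_abs] using
      norm_integral_le_integral_norm (μ := (ℙ : Measure Ω).restrict Aᶜ) z
  have hbeta : |β| * p ≤ 0.1 * p + Real.sqrt (Real.sqrt K) * Real.sqrt q := by
    have h1 : ∫ ω in A, z ω = - ∫ ω in Aᶜ, z ω := by linarith
    have h2 : |p * β| ≤ 0.1 * p + |∫ ω in Aᶜ, z ω| := by
      have : p * β = (∫ ω in A, (β - z ω)) + ∫ ω in A, z ω := by rw [hsubA]; ring
      rw [this, h1]
      calc |(∫ ω in A, (β - z ω)) + -∫ ω in Aᶜ, z ω|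
          ≤ |∫ ω in A, (β - z ω)| + |-∫ ω in Aᶜ, z ω| := abs_add_le _ _
        _ ≤ 0.1 * p + |∫ ω in Aᶜ, z ω| := by rw [abs_neg]; linarith
    have h3 : |p * β| = |β| * p := by
      rw [abs_mul, abs_of_nonneg hp0, mul_comm]
    linarith [hAcabs, hcs3, h3.symm.trans_le h2]
  -- numeric bounds
  have hs3 : (1.7:ℝ) ≤ Real.sqrt K := by
    rw [show (1.7:ℝ) = Real.sqrt (1.7^2) from (Real.sqrt_sq (by norm_num)).symm]
    exact Real.sqrt_le_sqrt (by norm_num; linarith)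
  have hsKsq : Real.sqrt K ^ 2 = K := Real.sq_sqrt hK0.le
  have h10 : 10 * K * q ≤ 1 := by
    have h := mul_le_mul_of_nonneg_left hqlt (by positivity : (0:ℝ) ≤ 10 * K)
    have : 10 * K * (1/(10*K)) = 1 := by field_simp
    linarith
  have hb1 : Real.sqrt K * Real.sqrt q ≤ 0.32 := by
    rw [← Real.sqrt_mul hK0.le]
    calc Real.sqrt (K * q) ≤ Real.sqrt (1/10) := Real.sqrt_le_sqrt (by linarith)
      _ ≤ 0.32 := by
          rw [show (0.32:ℝ) = Real.sqrt (0.32^2) from (Real.sqrt_sq (by norm_num)).symm]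
          exact Real.sqrt_le_sqrt (by norm_num)
  have hb2 : Real.sqrt (Real.sqrt K) * Real.sqrt q ≤ 0.25 := by
    rw [← Real.sqrt_mul (Real.sqrt_nonneg K)]
    have hs0 : (0:ℝ) ≤ Real.sqrt K := Real.sqrt_nonneg K
    have hKq : Real.sqrt K * q ≤ 1/16 := by
      nlinarith [mul_nonneg (by linarith : (0:ℝ) ≤ Real.sqrt K - 1.7) (mul_nonneg hs0 hq0)]
    calc Real.sqrt (Real.sqrt K * q) ≤ Real.sqrt (1/16) := Real.sqrt_le_sqrt hKq
      _ = 0.25 := by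
          rw [show (1:ℝ)/16 = 0.25^2 by norm_num]
          exact Real.sqrt_sq (by norm_num)
  -- final contradiction
  have hp29 : (29:ℝ)/30 ≤ p := by
    have h30 : 1/(10*K) ≤ 1/30 := by
      rw [div_le_div_iff₀ (by positivity) (by norm_num)]; linarith
    linarith
  have hβ0 : (0:ℝ) ≤ |β| := abs_nonneg β
  have hbp : |β| * p ≤ 0.35 := by linarith
  have hb : |β| ≤ 10.5/29 := by
    have h1 : |β| * (29/30) ≤ |β| * p := mul_le_mul_of_nonneg_left hp29 hβ0
    linarith
  have hmain : 1 ≤ (|β| + 0.1)^2 * p + Real.sqrt K * Real.sqrt q := by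
    linarith [hvar, hsplit2, hA2, hcs2]
  have h1 : (|β| + 0.1)^2 ≤ (13.4/29)^2 :=
    pow_le_pow_left₀ (by linarith) (by linarith) 2
  have h2 : (|β| + 0.1)^2 * p ≤ (13.4/29)^2 := by
    calc (|β| + 0.1)^2 * p ≤ (|β| + 0.1)^2 * 1 :=
          mul_le_mul_of_nonneg_left hple (sq_nonneg _)
      _ ≤ (13.4/29)^2 := by linarith
  linarith [hmain, hb1]
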